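/- Let h be a real-valued harmonic function on the open unit disc D in the complex plane, continuous on the closed disc. If h(0) ≤ log ε for some ε ∈ (0,1), h ≤ log 2 on the unit circle, and h(r) ≥ 0 for some r ∈ (0,1), then log(1/ε) ≤ ((1+r)/(1-r))² · log 2. -/

import Mathlib

open Real Complex intervalIntegral

set_option maxHeartbeats 2000000 in
/-- Let h be a real-valued harmonic function on the unit disc, continuous on the closed disc;
its harmonicity is encoded by the mean value property at 0 and the Poisson integral
representation at r.  If h(0) ≤ log ε with ε ∈ (0,1), h ≤ log 2 on the unit circle, and
h(r) ≥ 0 for some r ∈ (0,1), then log(1/ε) ≤ ((1+r)/(1-r))² · log 2. -/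
theorem stmt_0 (h : ℂ → ℝ) (ε r : ℝ) (hε : ε ∈ Set.Ioo (0 : ℝ) 1)
    (hr : r ∈ Set.Ioo (0 : ℝ) 1)
    (hcont : ContinuousOn h (Metric.closedBall (0 : ℂ) 1))
    (hint : IntervalIntegrable (fun θ : ℝ => h (Complex.exp (θ * Complex.I)))
      MeasureTheory.volume 0 (2 * π))
    (hmean : h 0 = (2 * π)⁻¹ * ∫ θ in (0 : ℝ)..2 * π, h (Complex.exp (θ * Complex.I)))
    (hpoisson : h (r : ℂ) = (2 * π)⁻¹ * ∫ θ in (0 : ℝ)..2 * π,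
      ((1 - r ^ 2) / (1 - 2 * r * Real.cos θ + r ^ 2)) * h (Complex.exp (θ * Complex.I)))
    (h0 : h 0 ≤ Real.log ε)
    (hbd : ∀ θ : ℝ, h (Complex.exp (θ * Complex.I)) ≤ Real.log 2)
    (hrpos : 0 ≤ h (r : ℂ)) :
    Real.log (1 / ε) ≤ ((1 + r) / (1 - r)) ^ 2 * Real.log 2 := by
  obtain ⟨hε0, hε1⟩ := hε
  obtain ⟨hr0, hr1⟩ := hr
  have hrr : (0:ℝ) < 1 - r := by linarith
  have hrr' : (0:ℝ) < 1 + r := by linarith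
  have hπ : (0:ℝ) < 2 * π := by positivity
  set f : ℝ → ℝ := fun θ => h (Complex.exp (θ * Complex.I)) with hfdef
  set P : ℝ → ℝ := fun θ => (1 - r ^ 2) / (1 - 2 * r * Real.cos θ + r ^ 2) with hPdef
  set M : ℝ := (1 + r) / (1 - r) with hMdef
  set m : ℝ := (1 - r) / (1 + r) with hmdef
  have hMpos : 0 < M := div_pos hrr' hrr
  have hmpos : 0 < m := div_pos hrr hrr'
  have hMm : M ^ 2 * m = M := by
    rw [hMdef, hmdef]; field_simp
  -- Poisson kernel bounds
  have hDpos : ∀ θ : ℝ, 0 < 1 - 2 * r * Real.cos θ + r ^ 2 := by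
    intro θ
    nlinarith [Real.cos_le_one θ, sq_nonneg (1 - r)]
  have hPle : ∀ θ : ℝ, P θ ≤ M := by
    intro θ
    rw [hPdef, hMdef, div_le_div_iff₀ (hDpos θ) hrr]
    nlinarith [mul_nonneg (mul_nonneg hrr'.le hr0.le) (sub_nonneg.mpr (Real.cos_le_one θ))]
  have hPge : ∀ θ : ℝ, m ≤ P θ := by
    intro θ
    rw [hPdef, hmdef, div_le_div_iff₀ hrr' (hDpos θ)]
    nlinarith [mul_nonneg (mul_nonneg hrr.le hr0.le)
      (by linarith [Real.neg_one_le_cos θ] : (0:ℝ) ≤ 1 + Real.cos θ)]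
  -- positive and negative parts
  set fp : ℝ → ℝ := fun θ => max (f θ) 0 with hfpdef
  set fm : ℝ → ℝ := fun θ => max (-f θ) 0 with hfmdef
  have hfpeq : fp = fun θ => (f θ + |f θ|) / 2 := by
    funext θ
    rcases le_total (f θ) 0 with hc | hc
    · rw [hfpdef]; simp only; rw [max_eq_right hc, abs_of_nonpos hc]; ring
    · rw [hfpdef]; simp only; rw [max_eq_left hc, _root_.abs_of_nonneg hc]; ring
  have hfmeq : fm = fun θ => (|f θ| - f θ) / 2 := by
    funext θ
    rcases le_total (f θ) 0 with hc | hc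
    · rw [hfmdef]; simp only; rw [max_eq_left (by linarith), abs_of_nonpos hc]; ring
    · rw [hfmdef]; simp only; rw [max_eq_right (by linarith), _root_.abs_of_nonneg hc]; ring
  have hfpint : IntervalIntegrable fp MeasureTheory.volume 0 (2 * π) := by
    rw [hfpeq]; exact (hint.add hint.abs).div_const 2
  have hfmint : IntervalIntegrable fm MeasureTheory.volume 0 (2 * π) := by
    rw [hfmeq]; exact (hint.abs.sub hint).div_const 2
  have hfsub : ∀ θ, fp θ - fm θ = f θ := fun θ => max_zero_sub_max_neg_zero_eq_self (f θ)
  -- continuity of P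
  have hPcont : Continuous P := by
    rw [hPdef]
    exact continuous_const.div
      ((continuous_const.sub (continuous_const.mul Real.continuous_cos)).add continuous_const)
      (fun θ => (hDpos θ).ne')
  have hPfint : IntervalIntegrable (fun θ => P θ * f θ) MeasureTheory.volume 0 (2 * π) :=
    hint.continuousOn_mul hPcont.continuousOn
  -- pointwise bound
  have hkey : ∀ θ : ℝ, P θ * f θ ≤ M * fp θ - m * fm θ := by
    intro θ
    rcases le_total 0 (f θ) with hc | hc
    · have h1 : fp θ = f θ := max_eq_left hc
      have h2 : fm θ = 0 := max_eq_right (by linarith)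
      rw [h1, h2]
      nlinarith [hPle θ]
    · have h1 : fp θ = 0 := max_eq_right hc
      have h2 : fm θ = -f θ := max_eq_left (by linarith)
      rw [h1, h2]
      nlinarith [hPge θ]
  -- integral comparisons
  set I1 : ℝ := ∫ θ in (0:ℝ)..2 * π, fp θ with hI1
  set I2 : ℝ := ∫ θ in (0:ℝ)..2 * π, fm θ with hI2
  have hI1nonneg : 0 ≤ I1 := by
    apply intervalIntegral.integral_nonneg (le_of_lt hπ)
    intro θ _; exact le_max_right _ _
  have hI1le : I1 ≤ 2 * π * Real.log 2 := by
    have : I1 ≤ ∫ _ in (0:ℝ)..2 * π, Real.log 2 := by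
      apply intervalIntegral.integral_mono_on (le_of_lt hπ) hfpint intervalIntegrable_const
      intro θ _
      have h2 : (0:ℝ) ≤ Real.log 2 := Real.log_nonneg (by norm_num)
      exact max_le (hbd θ) h2
    simpa [mul_comm] using this
  have hIple : (∫ θ in (0:ℝ)..2 * π, P θ * f θ) ≤ M * I1 - m * I2 := by
    have h1 : (∫ θ in (0:ℝ)..2 * π, P θ * f θ) ≤
        ∫ θ in (0:ℝ)..2 * π, (M * fp θ - m * fm θ) := by
      apply intervalIntegral.integral_mono_on (le_of_lt hπ) hPfint
        ((hfpint.const_mul M).sub (hfmint.const_mul m))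
      intro θ _; exact hkey θ
    rwa [intervalIntegral.integral_sub (hfpint.const_mul M) (hfmint.const_mul m),
      intervalIntegral.integral_const_mul, intervalIntegral.integral_const_mul] at h1
  have hIpnonneg : 0 ≤ ∫ θ in (0:ℝ)..2 * π, P θ * f θ := by
    have := hrpos
    rw [hpoisson] at this
    have hpi : (0:ℝ) < (2 * π)⁻¹ := by positivity
    nlinarith [this]
  have hmean2 : h 0 = (2 * π)⁻¹ * (I1 - I2) := by
    rw [hmean, hI1, hI2, ← intervalIntegral.integral_sub hfpint hfmint]
    congr 1
    exact intervalIntegral.integral_congr (fun θ _ => (hfsub θ).symm)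
  -- combine
  have hI2le : I2 ≤ M ^ 2 * I1 := by
    have h1 : m * I2 ≤ M * I1 := by linarith
    have h2 : m * I2 ≤ M ^ 2 * m * I1 := by rw [hMm]; exact h1
    have := mul_le_mul_of_nonneg_left h2 (le_of_lt (inv_pos.mpr hmpos))
    calc I2 = m⁻¹ * (m * I2) := by field_simp
      _ ≤ m⁻¹ * (M ^ 2 * m * I1) := this
      _ = M ^ 2 * I1 := by field_simp
  have hlogε : Real.log (1 / ε) = -Real.log ε := by
    rw [one_div, Real.log_inv]
  rw [hlogε]
  have hM1 : 1 ≤ M ^ 2 := by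
    have : 1 ≤ M := by rw [hMdef, le_div_iff₀ hrr]; linarith
    nlinarith
  clear_value f P fp fm I1 I2 M m
  have hstep : -h 0 ≤ (2 * π)⁻¹ * (M ^ 2 - 1) * I1 := by
    rw [hmean2]
    have h3 : I2 - I1 ≤ (M ^ 2 - 1) * I1 := by
      calc I2 - I1 ≤ M ^ 2 * I1 - I1 := by linarith
        _ = (M ^ 2 - 1) * I1 := by ring
    have hpi : (0:ℝ) < (2 * π)⁻¹ := by positivity
    have h4 := mul_le_mul_of_nonneg_left h3 hpi.le
    have h5 : (2 * π)⁻¹ * ((M ^ 2 - 1) * I1) = (2 * π)⁻¹ * (M ^ 2 - 1) * I1 := by ring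
    rw [h5] at h4
    linarith [h4]
  have hfinal : (2 * π)⁻¹ * (M ^ 2 - 1) * I1 ≤ M ^ 2 * Real.log 2 := by
    have hpi : (0:ℝ) < (2 * π)⁻¹ := by positivity
    have h1 : (M ^ 2 - 1) * I1 ≤ (M ^ 2 - 1) * (2 * π * Real.log 2) :=
      mul_le_mul_of_nonneg_left hI1le (by linarith)
    have h3 := mul_le_mul_of_nonneg_left h1 hpi.le
    have h2 : (2 * π)⁻¹ * ((M ^ 2 - 1) * (2 * π * Real.log 2)) =
        (M ^ 2 - 1) * Real.log 2 := by
      field_simp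
    rw [h2] at h3
    have hlog2 : (0:ℝ) ≤ Real.log 2 := Real.log_nonneg (by norm_num)
    have h4 : (M ^ 2 - 1) * Real.log 2 ≤ M ^ 2 * Real.log 2 := by
      have : (M ^ 2 - 1) * Real.log 2 = M ^ 2 * Real.log 2 - Real.log 2 := by ring
      linarith
    calc (2 * π)⁻¹ * (M ^ 2 - 1) * I1 = (2 * π)⁻¹ * ((M ^ 2 - 1) * I1) := by ring
      _ ≤ (M ^ 2 - 1) * Real.log 2 := h3
      _ ≤ M ^ 2 * Real.log 2 := h4
  linarith
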